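/- Let G = (V,E) be a directed mixed graph and α, β ∈ V. If there exists a bidirected inducing path from α to β in G, then the DMG G⁺ obtained from G by adding the bidirected edge α↔β satisfies I(G⁺) = I(G). -/

import Mathlib

/-!
Directed mixed graphs (DMGs) with μ-separation, following
Mogensen & Hansen, "Markov equivalence of marginalized local independence graphs".
-/

universe u

/-- A directed mixed graph on node set `V`: a set of directed edges (`dir a b`
meaning `a → b`) and a set of bidirected edges (`bi`, a symmetric relation since
bidirected edges are unordered pairs).  Loops are allowed. -/
structure DMG (V : Type u) where
  dir : V → V → Prop
  bi : V → V → Prop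
  bi_symm : ∀ a b, bi a b → bi b a

namespace DMG

variable {V : Type u}

/-- A single step of a walk: an edge instance together with the direction in
which it is traversed (this records, in particular, orientations of loops).
A directed edge has a tail at its source and a head at its target; a bidirected
edge has heads at both endpoints. -/
inductive Step (G : DMG V) : V → V → Type u
  | dirF : ∀ {a b : V}, G.dir a b → Step G a b
  | dirB : ∀ {a b : V}, G.dir b a → Step G a b
  | bid  : ∀ {a b : V}, G.bi a b → Step G a b

/-- Whether the step has a head (edge mark) at its start node. -/
def Step.headStart {G : DMG V} : ∀ {a b : V}, Step G a b → Bool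
  | _, _, .dirF _ => false
  | _, _, .dirB _ => true
  | _, _, .bid _ => true

/-- Whether the step has a head (edge mark) at its end node. -/
def Step.headEnd {G : DMG V} : ∀ {a b : V}, Step G a b → Bool
  | _, _, .dirF _ => true
  | _, _, .dirB _ => false
  | _, _, .bid _ => true

/-- The step traverses a bidirected edge. -/
def Step.IsBid {G : DMG V} {a b : V} : Step G a b → Prop
  | .bid _ => True
  | _ => False

/-- The step traverses a directed edge, forwards. -/
def Step.IsDirF {G : DMG V} {a b : V} : Step G a b → Prop
  | .dirF _ => True
  | _ => False

/-- The underlying edge of a step: a directed edge is the ordered pair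
(tail, head); a bidirected edge is the unordered pair of its endpoints. -/
def Step.edge {G : DMG V} : ∀ {a b : V}, Step G a b → (V × V) ⊕ (Sym2 V)
  | a, b, .dirF _ => Sum.inl (a, b)
  | a, b, .dirB _ => Sum.inl (b, a)
  | a, b, .bid _ => Sum.inr s(a, b)

/-- A walk in a DMG: an alternating sequence of nodes and edges, each edge
between its neighbouring nodes, with a chosen orientation of each edge
(in particular of each directed loop). -/
inductive Walk (G : DMG V) : V → V → Type u
  | nil (a : V) : Walk G a a
  | cons {a b c : V} (s : Step G a b) (w : Walk G b c) : Walk G a c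

namespace Walk

variable {G : DMG V}

/-- A nontrivial walk contains at least one edge. -/
def Nontrivial : ∀ {a b : V}, Walk G a b → Prop
  | _, _, .nil _ => False
  | _, _, .cons _ _ => True

/-- The list of nodes of a walk, in order (with multiplicity). -/
def nodes : ∀ {a b : V}, Walk G a b → List V
  | a, _, .nil _ => [a]
  | a, _, .cons _ w => a :: w.nodes

/-- The non-endpoint (internal) nodes of a walk, in order (with multiplicity). -/
def interior {a b : V} (w : Walk G a b) : List V :=
  (w.nodes.dropLast).drop 1

/-- The list of edges of a walk. -/
def edges : ∀ {a b : V}, Walk G a b → List ((V × V) ⊕ (Sym2 V))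
  | _, _, .nil _ => []
  | _, _, .cons s w => s.edge :: w.edges

/-- Whether the first edge of the walk has a head at the first node
(`false` for a trivial walk). -/
def firstHead : ∀ {a b : V}, Walk G a b → Bool
  | _, _, .nil _ => false
  | _, _, .cons s _ => s.headStart

/-- Whether the last edge of the walk has a head at the last node
(`false` for a trivial walk). -/
def lastHead : ∀ {a b : V}, Walk G a b → Bool
  | _, _, .nil _ => false
  | _, _, .cons s (.nil _) => s.headEnd
  | _, _, .cons _ (.cons t w) => lastHead (Walk.cons t w)

/-- Helper: conditions at all remaining internal node instances of a walk,
where `h` records whether the edge arriving at the current start node has a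
head there.  A node instance is a collider if both adjoining edges have a
head at it; a collider must lie in `Anc`, a noncollider must avoid `C`. -/
def openFrom (C Anc : Set V) : ∀ {a b : V}, Bool → Walk G a b → Prop
  | _, _, _, .nil _ => True
  | a, _, h, .cons s w =>
      (if h && s.headStart then a ∈ Anc else a ∉ C) ∧ openFrom C Anc s.headEnd w

/-- Helper: every remaining internal node instance which is a collider lies in `S`. -/
def collInFrom (S : Set V) : ∀ {a b : V}, Bool → Walk G a b → Prop
  | _, _, _, .nil _ => True
  | a, _, h, .cons s w =>
      ((h && s.headStart) = true → a ∈ S) ∧ collInFrom S s.headEnd w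

/-- Every collider (internal node instance with heads on both sides) of the
walk lies in `S`. -/
def CollidersIn (S : Set V) : ∀ {a b : V}, Walk G a b → Prop
  | _, _, .nil _ => True
  | _, _, .cons s w => collInFrom S s.headEnd w

/-- The walk has no colliders. -/
def NoColliders {a b : V} (w : Walk G a b) : Prop :=
  w.CollidersIn ∅

/-- Helper: every remaining internal node instance is a collider. -/
def allCollFrom : ∀ {a b : V}, Bool → Walk G a b → Prop
  | _, _, _, .nil _ => True
  | _, _, h, .cons s w => (h && s.headStart) = true ∧ allCollFrom s.headEnd w

/-- Every internal node instance of the walk is a collider (no noncolliders). -/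
def AllColliders : ∀ {a b : V}, Walk G a b → Prop
  | _, _, .nil _ => True
  | _, _, .cons s w => allCollFrom s.headEnd w

/-- Every edge of the walk is bidirected. -/
def AllBid : ∀ {a b : V}, Walk G a b → Prop
  | _, _, .nil _ => True
  | _, _, .cons s w => s.IsBid ∧ w.AllBid

/-- The walk consists of a directed first edge (pointing forwards) followed by
bidirected edges only (the form `α → β` or `α → γ₁ ↔ ⋯ ↔ γₙ ↔ β`). -/
def UniForm : ∀ {a b : V}, Walk G a b → Prop
  | _, _, .nil _ => False
  | _, _, .cons s w => s.IsDirF ∧ w.AllBid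

end Walk

/-- `a` is an ancestor of `b`: there is a (possibly trivial) directed path
from `a` to `b`. -/
def anc (G : DMG V) (a b : V) : Prop := Relation.ReflTransGen G.dir a b

/-- The set of ancestors of nodes of `C`. -/
def anSet (G : DMG V) (C : Set V) : Set V := {a | ∃ c ∈ C, G.anc a c}

/-- The walk is μ-connecting given `C`: it is nontrivial, its first node is not
in `C`, every collider lies in `An(C)`, no noncollider lies in `C`, and its
final edge has a head at the final node. -/
def Walk.MuConn {G : DMG V} (C : Set V) : ∀ {a b : V}, Walk G a b → Prop
  | _, _, .nil _ => False
  | a, _, .cons s w =>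
      a ∉ C ∧ Walk.openFrom C (G.anSet C) s.headEnd w ∧ (Walk.cons s w).lastHead = true

/-- `B` is μ-separated from `A` given `C` in `G`: there is no μ-connecting
walk from any node of `A` to any node of `B` given `C`. -/
def muSep (G : DMG V) (A B C : Set V) : Prop :=
  ∀ ⦃a b : V⦄, a ∈ A → b ∈ B → ∀ w : Walk G a b, ¬ w.MuConn C

/-- Two DMGs on the same node set are Markov equivalent: they induce the same
independence model via μ-separation, i.e. `I(G₁) = I(G₂)`. -/
def MarkovEq (G₁ G₂ : DMG V) : Prop :=
  ∀ A B C : Set V, muSep G₁ A B C ↔ muSep G₂ A B C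

/-- `b` is separable from `a` in `I(G)`: there is `C ⊆ V ∖ {a}` with
`⟨{a},{b} | C⟩ ∈ I(G)`. -/
def separable (G : DMG V) (a b : V) : Prop :=
  ∃ C : Set V, a ∉ C ∧ muSep G {a} {b} C

/-- `a ∈ u(b, I(G))`: `b` is inseparable from `a` in `I(G)`. -/
def inU (G : DMG V) (a b : V) : Prop := ¬ G.separable a b

/-- `G₁` is a subgraph of `G₂` (same node set, edge-set inclusion). -/
def Sub (G₁ G₂ : DMG V) : Prop :=
  (∀ a b, G₁.dir a b → G₂.dir a b) ∧ (∀ a b, G₁.bi a b → G₂.bi a b)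

/-- The DMG obtained by adding the directed edge `a → b`. -/
def addDir (G : DMG V) (a b : V) : DMG V where
  dir x y := G.dir x y ∨ (x = a ∧ y = b)
  bi := G.bi
  bi_symm := G.bi_symm

/-- The DMG obtained by adding the bidirected edge `a ↔ b`. -/
def addBi (G : DMG V) (a b : V) : DMG V where
  dir := G.dir
  bi x y := G.bi x y ∨ (x = a ∧ y = b) ∨ (x = b ∧ y = a)
  bi_symm x y h := by
    rcases h with h | h | h
    · exact Or.inl (G.bi_symm _ _ h)
    · exact Or.inr (Or.inr ⟨h.2, h.1⟩)
    · exact Or.inr (Or.inl ⟨h.2, h.1⟩)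

/-- The DMG obtained by removing the directed edge `a → b`. -/
def removeDir (G : DMG V) (a b : V) : DMG V where
  dir x y := G.dir x y ∧ ¬(x = a ∧ y = b)
  bi := G.bi
  bi_symm := G.bi_symm

/-- The DMG obtained by removing the bidirected edge `a ↔ b`. -/
def removeBi (G : DMG V) (a b : V) : DMG V where
  dir := G.dir
  bi x y := G.bi x y ∧ ¬((x = a ∧ y = b) ∨ (x = b ∧ y = a))
  bi_symm x y h := ⟨G.bi_symm _ _ h.1, fun hc => h.2 (by tauto)⟩

/-- The complete DMG: all directed and all bidirected edges present. -/
def IsComplete (G : DMG V) : Prop :=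
  (∀ a b, G.dir a b) ∧ (∀ a b, G.bi a b)

/-- A DMG is maximal if it is complete, or adding any (absent) edge changes the
induced independence model. -/
def IsMaximal (G : DMG V) : Prop :=
  G.IsComplete ∨
    ∀ a b : V, (¬ G.dir a b → ¬ MarkovEq (G.addDir a b) G) ∧
      (¬ G.bi a b → ¬ MarkovEq (G.addBi a b) G)

end DMG
namespace DMG

variable {V : Type u}

/-- An inducing path from `a` to `b`: a nontrivial path or cycle from `a` to
`b` with a head at `b`, with no noncolliders, and on which every node is an
ancestor of `a` or of `b`. -/
def IsInducingPath (G : DMG V) {a b : V} (w : Walk G a b) : Prop :=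
  w.Nontrivial ∧
  (w.nodes.Nodup ∨ (a = b ∧ w.nodes.dropLast.Nodup)) ∧
  w.lastHead = true ∧
  w.AllColliders ∧
  ∀ x ∈ w.nodes, G.anc x a ∨ G.anc x b

/-- A bidirected inducing path: an inducing path all of whose edges are bidirected. -/
def IsBidirectedIP (G : DMG V) {a b : V} (w : Walk G a b) : Prop :=
  G.IsInducingPath w ∧ w.AllBid

/-- A directed inducing path: an inducing path of the form `α → β` or
`α → γ₁ ↔ ⋯ ↔ γₙ ↔ β` with every `γᵢ` an ancestor of `β`. -/
def IsDirectedIP (G : DMG V) {a b : V} (w : Walk G a b) : Prop :=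
  G.IsInducingPath w ∧ w.UniForm ∧ ∀ x ∈ w.interior, G.anc x b

/-- There exists a nontrivial walk in `G` between `x` and `y` with no
colliders, all non-endpoint nodes in `M`, and with edge marks `hs` at `x`
(`true` = head) and `he` at `y`. -/
def ConnThrough (G : DMG V) (M : Set V) (x y : V) (hs he : Bool) : Prop :=
  ∃ w : Walk G x y, w.Nontrivial ∧ w.NoColliders ∧
    (∀ z ∈ w.interior, z ∈ M) ∧ w.firstHead = hs ∧ w.lastHead = he

/-- The latent projection `m(G, O)` of `G` on `O`: the DMG on node set `O`
having an edge (with given endpoint marks) between `α` and `β` if and only if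
`G` contains a nontrivial endpoint-identical walk between `α` and `β` with no
colliders and all non-endpoint nodes in `M = V ∖ O`. -/
def latentProj (G : DMG V) (O : Set V) : DMG {x : V // x ∈ O} where
  dir x y := ConnThrough G Oᶜ x.1 y.1 false true
  bi x y := ConnThrough G Oᶜ x.1 y.1 true true ∨ ConnThrough G Oᶜ y.1 x.1 true true
  bi_symm x y h := h.symm

/-- `x` is directedly collider-connected to `b`: there is a nontrivial walk
from `x` to `b` with a head at `b` on which every non-endpoint node is a
collider. -/
def dirCollConn (G : DMG V) (x b : V) : Prop :=
  ∃ w : Walk G x b, w.Nontrivial ∧ w.AllColliders ∧ w.lastHead = true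

/-- The set `D(a,b)` of nodes in `An({a,b})` directedly collider-connected to
`b`, except `a`. -/
def Dset (G : DMG V) (a b : V) : Set V :=
  {x | x ∈ G.anSet {a, b} ∧ G.dirCollConn x b} \ {a}

/-- `a` and `b` are potential siblings in the independence model `I(G)`. -/
def PotSib (G : DMG V) (a b : V) : Prop :=
  (G.inU b a ∧ G.inU a b) ∧
  (∀ (γ : V) (C : Set V), b ∈ C → muSep G {γ} {a} C → muSep G {γ} {b} C) ∧
  (∀ (γ : V) (C : Set V), a ∈ C → muSep G {γ} {b} C → muSep G {γ} {a} C)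

/-- `a` is a potential parent of `b` in the independence model `I(G)`. -/
def PotPar (G : DMG V) (a b : V) : Prop :=
  G.inU a b ∧
  (∀ (γ : V) (C : Set V), a ∉ C → muSep G {γ} {b} C → muSep G {γ} {a} C) ∧
  (∀ (γ δ : V) (C : Set V), a ∉ C → b ∈ C →
    muSep G {γ} {δ} C → muSep G {γ} {b} C ∨ muSep G {a} {δ} C) ∧
  (∀ (γ : V) (C : Set V), a ∉ C → muSep G {b} {γ} C → muSep G {b} {γ} (C ∪ {a}))

/-- The graph `N(I(G))`: directed edge `a → b` present iff `a` is a potential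
parent of `b` in `I(G)`, bidirected edge `a ↔ b` present iff `a` and `b` are
potential siblings in `I(G)` (potential siblinghood is symmetric). -/
def NGraph (G : DMG V) : DMG V where
  dir a b := G.PotPar a b
  bi a b := G.PotSib a b ∨ G.PotSib b a
  bi_symm _ _ h := h.symm

/-- A path is m-connecting given `C` if it is a path (no repeated nodes), no
noncollider on it is in `C` and every collider on it is in `An(C)`. -/
def Walk.MConn {G : DMG V} (C : Set V) : ∀ {a b : V}, Walk G a b → Prop
  | _, _, .nil _ => True
  | _, _, .cons s w =>
      (Walk.cons s w).nodes.Nodup ∧ Walk.openFrom C (G.anSet C) s.headEnd w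

/-- `A` and `B` are m-separated by `C`: there is no m-connecting path between
a node of `A` and a node of `B` given `C`. -/
def mSep (G : DMG V) (A B C : Set V) : Prop :=
  ∀ ⦃a b : V⦄, a ∈ A → b ∈ B →
    (∀ w : Walk G a b, ¬ w.MConn C) ∧ (∀ w : Walk G b a, ¬ w.MConn C)

/-- Auxiliary directed-edge relation of the `B`-history version of `G`. -/
def histDir (G : DMG V) (B : Set V) : (V ⊕ {x : V // x ∈ B}) → (V ⊕ {x : V // x ∈ B}) → Prop
  | .inl u, .inl v => G.dir u v
  | .inl u, .inr v => G.dir u v.1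
  | _, _ => False

/-- Auxiliary bidirected-edge relation of the `B`-history version of `G`. -/
def histBi (G : DMG V) (B : Set V) : (V ⊕ {x : V // x ∈ B}) → (V ⊕ {x : V // x ∈ B}) → Prop
  | .inl u, .inl v => G.bi u v
  | .inl u, .inr v => G.bi u v.1
  | .inr u, .inl v => G.bi u.1 v
  | .inr _, .inr _ => False

/-- The `B`-history version `G(B)` of `G`: node set `V ⊔ Bᵖ`, whose subgraph
on `V` is `G`, with additionally `α ↔ βᵖ` whenever `α ↔ β` in `G` and
`α → βᵖ` whenever `α → β` in `G` (for `α ∈ V`, `β ∈ B`). -/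
def hist (G : DMG V) (B : Set V) : DMG (V ⊕ {x : V // x ∈ B}) where
  dir := G.histDir B
  bi := G.histBi B
  bi_symm x y h := by
    cases x <;> cases y <;>
      simp only [histBi] at h ⊢ <;>
      first
        | exact G.bi_symm _ _ h
        | exact h

end DMG

namespace DMG

variable {V : Type u} {G : DMG V}

namespace Walk

/-- Concatenation of walks. -/
def append : ∀ {x y z : V}, Walk G x y → Walk G y z → Walk G x z
  | _, _, _, .nil _, q => q
  | _, _, _, .cons s w, q => .cons s (w.append q)

/-- The head-mark arriving at the final node, where `h` is the mark arriving
at the start node (used for trivial walks). -/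
def endFlag : ∀ {x y : V}, Bool → Walk G x y → Bool
  | _, _, h, .nil _ => h
  | _, _, _, .cons s w => endFlag s.headEnd w

/-- Openness conditions at the internal nodes of a walk (endpoints unchecked). -/
def innerOpen (C A : Set V) : ∀ {x y : V}, Walk G x y → Prop
  | _, _, .nil _ => True
  | _, _, .cons s w => Walk.openFrom C A s.headEnd w

lemma lastHead_cons : ∀ {x m y : V} (s : Step G x m) (w : Walk G m y),
    (Walk.cons s w).lastHead = endFlag s.headEnd w
  | _, _, _, _, .nil _ => rfl
  | _, _, _, _, .cons t w0 => lastHead_cons t w0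

lemma endFlag_congr : ∀ {x y : V} {W : Walk G x y}, W.Nontrivial →
    ∀ (h1 h2 : Bool), endFlag h1 W = endFlag h2 W
  | _, _, .nil _, hnt, _, _ => hnt.elim
  | _, _, .cons _ _, _, _, _ => rfl

lemma endFlag_append : ∀ {x y z : V} (P : Walk G x y) (Q : Walk G y z) (h : Bool),
    endFlag h (P.append Q) = endFlag (endFlag h P) Q
  | _, _, _, .nil _, _, _ => rfl
  | _, _, _, .cons s w, Q, h => endFlag_append w Q s.headEnd

lemma nontrivial_append_right : ∀ {x y z : V} (P : Walk G x y) (Q : Walk G y z),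
    Q.Nontrivial → (P.append Q).Nontrivial
  | _, _, _, .nil _, _, hQ => hQ
  | _, _, _, .cons _ _, _, _ => trivial

lemma nontrivial_append_left : ∀ {x y z : V} (P : Walk G x y) (Q : Walk G y z),
    P.Nontrivial → (P.append Q).Nontrivial
  | _, _, _, .nil _, _, hP => hP.elim
  | _, _, _, .cons _ _, _, _ => trivial

lemma firstHead_append_true : ∀ {x y z : V} {P : Walk G x y} {Q : Walk G y z},
    (P.Nontrivial → P.firstHead = true) → Q.firstHead = true →
    (P.append Q).firstHead = true
  | _, _, _, .nil _, _, _, hQ => hQ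
  | _, _, _, .cons _ _, _, hP, _ => hP trivial

lemma openFrom_append_of {C A : Set V} : ∀ {x y z : V} (P : Walk G x y) (Q : Walk G y z)
    (h : Bool), Walk.openFrom C A h P → Walk.openFrom C A (endFlag h P) Q →
    Walk.openFrom C A h (P.append Q)
  | _, _, _, .nil _, _, _, _, hQ => hQ
  | _, _, _, .cons s w, Q, h, hP, hQ => ⟨hP.1, openFrom_append_of w Q s.headEnd hP.2 hQ⟩

lemma innerOpen_of_openFrom {C A : Set V} : ∀ {x y : V} {h : Bool} {w : Walk G x y},
    Walk.openFrom C A h w → innerOpen C A w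
  | _, _, _, .nil _, _ => trivial
  | _, _, _, .cons _ _, hw => hw.2

lemma innerOpen_append {C A : Set V} : ∀ {x y z : V} {P : Walk G x y} {Q : Walk G y z},
    innerOpen C A P → innerOpen C A Q →
    (P.Nontrivial → Walk.openFrom C A (endFlag false P) Q) →
    innerOpen C A (P.append Q)
  | _, _, _, .nil _, _, _, hQi, _ => hQi
  | _, _, _, .cons s w, Q, hP, _, hQj =>
      openFrom_append_of w Q s.headEnd hP (hQj trivial)

lemma start_mem_nodes : ∀ {x y : V} (w : Walk G x y), x ∈ w.nodes
  | _, _, .nil _ => List.mem_singleton.mpr rfl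
  | _, _, .cons _ _ => List.mem_cons_self

lemma mem_nodes_append : ∀ {x y z v : V} (P : Walk G x y) (Q : Walk G y z),
    v ∈ (P.append Q).nodes → v ∈ P.nodes ∨ v ∈ Q.nodes
  | _, _, _, _, .nil _, _, hv => Or.inr hv
  | _, _, _, _, .cons s w, Q, hv => by
      rcases List.mem_cons.mp hv with h | h
      · exact Or.inl (h ▸ List.mem_cons_self)
      · rcases mem_nodes_append w Q h with h' | h'
        · exact Or.inl (List.mem_cons_of_mem _ h')
        · exact Or.inr h'

end Walk

/-- Reversal of a step. -/
def Step.symm : ∀ {x y : V}, Step G x y → Step G y x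
  | _, _, .dirF e => .dirB e
  | _, _, .dirB e => .dirF e
  | _, _, .bid e => .bid (G.bi_symm _ _ e)

namespace Walk

/-- Reversal of a walk. -/
def rev : ∀ {x y : V}, Walk G x y → Walk G y x
  | _, _, .nil v => .nil v
  | _, _, .cons s w => (rev w).append (.cons s.symm (.nil _))

lemma rev_nontrivial : ∀ {x y : V} {w : Walk G x y}, w.Nontrivial → w.rev.Nontrivial
  | _, _, .nil _, h => h.elim
  | _, _, .cons _ w, _ => nontrivial_append_right (rev w) _ trivial

lemma symm_isBid : ∀ {x y : V} {s : Step G x y}, s.IsBid → s.symm.IsBid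
  | _, _, .bid _, _ => trivial

lemma allBid_append : ∀ {x y z : V} {P : Walk G x y} {Q : Walk G y z},
    P.AllBid → Q.AllBid → (P.append Q).AllBid
  | _, _, _, .nil _, _, _, hQ => hQ
  | _, _, _, .cons _ w, _, hP, hQ => ⟨hP.1, allBid_append hP.2 hQ⟩

lemma rev_allBid : ∀ {x y : V} {w : Walk G x y}, w.AllBid → w.rev.AllBid
  | _, _, .nil _, _ => trivial
  | _, _, .cons _ w, h => allBid_append (rev_allBid h.2) ⟨symm_isBid h.1, trivial⟩

lemma mem_rev_nodes : ∀ {x y v : V} (w : Walk G x y), v ∈ w.rev.nodes → v ∈ w.nodes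
  | _, _, _, .nil _, h => h
  | _, _, v, .cons s w, h => by
      rcases mem_nodes_append (rev w) _ h with h' | h'
      · exact List.mem_cons_of_mem _ (mem_rev_nodes w h')
      · rcases List.mem_cons.mp h' with h'' | h''
        · exact List.mem_cons_of_mem _ (h'' ▸ start_mem_nodes w)
        · rcases List.mem_cons.mp h'' with h3 | h3
          · exact h3 ▸ List.mem_cons_self
          · exact absurd h3 List.not_mem_nil

end Walk

open Walk

/-- A directed walk down to `u`, with all nodes reachable from `z` outside `C`. -/
lemma descend {C A : Set V} {z u : V} (h : G.anc z u) :
    (∀ x, G.anc z x → x ∉ C) →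
    ∃ q : Walk G z u, (∀ hh, Walk.openFrom C A hh q) ∧ endFlag true q = true := by
  induction h using Relation.ReflTransGen.head_induction_on with
  | refl => exact fun _ => ⟨.nil u, fun _ => trivial, rfl⟩
  | head e h' ih =>
    intro hC
    obtain ⟨q, h1, h2⟩ := ih fun x hx => hC x (Relation.ReflTransGen.head e hx)
    refine ⟨.cons (.dirF e) q, fun hh => ⟨?_, h1 true⟩, h2⟩
    simp only [Step.headStart, Bool.and_false, Bool.false_eq_true, if_false]
    exact hC _ Relation.ReflTransGen.refl

/-- A reversed directed walk from `u` back up to `z`. -/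
lemma ascend {C A : Set V} {z u : V} (h : G.anc z u) (hC : ∀ x, G.anc z x → x ∉ C) :
    ∃ P : Walk G u z, Walk.openFrom C A false P ∧ (P.Nontrivial → P.firstHead = true) ∧
      endFlag false P = false := by
  induction h with
  | refl => exact ⟨.nil z, trivial, fun h => h.elim, rfl⟩
  | tail h' e ih =>
    obtain ⟨P0, h1, _, h3⟩ := ih
    refine ⟨.cons (.dirB e) P0, ⟨?_, h1⟩, fun _ => rfl, h3⟩
    simp only [Bool.false_and, Bool.false_eq_true, if_false]
    exact hC _ (h'.tail e)

lemma buildLink {a b : V} {C A : Set V} (hA : ∀ z, z ∉ A → ∀ x, G.anc z x → x ∉ C) :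
    ∀ {y : V} (q : Walk G y b), q.AllBid → (∀ x ∈ q.nodes, G.anc x a ∨ G.anc x b) →
      ∀ (P : Walk G a y), innerOpen C A P →
        (P.Nontrivial → P.firstHead = true ∧ (endFlag false P = true → y ∈ A) ∧
          (endFlag false P = false → y ∉ C)) →
        (q.Nontrivial ∨ (P.Nontrivial ∧ endFlag false P = true)) →
        ∃ W : Walk G a b, W.Nontrivial ∧ W.firstHead = true ∧ endFlag false W = true ∧
          innerOpen C A W := by
  intro y q
  induction q with
  | nil =>
    intro _ _ P hPi hPinv hpre
    rcases hpre with h | ⟨hnt, hend⟩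
    · exact h.elim
    · exact ⟨P, hnt, (hPinv hnt).1, hend, hPi⟩
  | @cons y0 m bb s q' ih =>
    intro hbid hanc P hPi hPinv _
    obtain ⟨hsb, hbid'⟩ := hbid
    cases s with
    | dirF e => exact hsb.elim
    | dirB e => exact hsb.elim
    | bid e =>
      have hanc' : ∀ x ∈ q'.nodes, G.anc x a ∨ G.anc x bb :=
        fun x hx => hanc x (List.mem_cons_of_mem _ hx)
      by_cases hm : m ∈ A
      · -- keep `m` as a collider and continue
        refine ih hbid' hanc' (P.append (.cons (.bid e) (.nil m))) ?_ ?_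
          (Or.inr ⟨nontrivial_append_right _ _ trivial, by rw [endFlag_append]; rfl⟩)
        · refine innerOpen_append hPi trivial ?_
          intro hPnt
          obtain ⟨_, h1, h2⟩ := hPinv hPnt
          refine ⟨?_, trivial⟩
          cases hel : endFlag false P with
          | false =>
            simp only [Step.headStart, Bool.false_and, Bool.false_eq_true, if_false]
            exact h2 hel
          | true =>
            simp only [Step.headStart, Bool.true_and, if_true]
            exact h1 hel
        · intro _
          refine ⟨firstHead_append_true (fun h => (hPinv h).1) rfl, fun _ => hm, ?_⟩
          rw [endFlag_append]
          intro hcontra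
          exact absurd hcontra (by simp [Walk.endFlag, Step.headEnd])
      · have hdesc : ∀ x, G.anc m x → x ∉ C := hA m hm
        by_cases hmb : G.anc m bb
        · -- finish: descend from m to bb
          obtain ⟨qd, hq1, hq2⟩ := descend (A := A) hmb hdesc
          refine ⟨P.append (.cons (.bid e) qd), nontrivial_append_right _ _ trivial,
            firstHead_append_true (fun h => (hPinv h).1) rfl, ?_, ?_⟩
          · rw [endFlag_append]; exact hq2
          · refine innerOpen_append hPi (hq1 true) ?_
            intro hPnt
            obtain ⟨_, h1, h2⟩ := hPinv hPnt
            refine ⟨?_, hq1 true⟩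
            cases hel : endFlag false P with
            | false =>
              simp only [Step.headStart, Bool.false_and, Bool.false_eq_true, if_false]
              exact h2 hel
            | true =>
              simp only [Step.headStart, Bool.true_and, if_true]
              exact h1 hel
        · -- restart: ascend from m back to a
          have hmbne : m ≠ bb := fun hh => hmb (by subst hh; exact Relation.ReflTransGen.refl)
          have hma : G.anc m a := by
            rcases hanc m (List.mem_cons_of_mem _ (start_mem_nodes q')) with h | h
            exacts [h, absurd h hmb]
          obtain ⟨P', hp1, hp2, hp3⟩ := ascend (A := A) hma hdesc
          have hq'nt : q'.Nontrivial := by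
            cases q' with
            | nil => exact absurd rfl hmbne
            | cons _ _ => trivial
          refine ih hbid' hanc' P' (innerOpen_of_openFrom hp1) ?_ (Or.inl hq'nt)
          intro hnt
          exact ⟨hp2 hnt, by rw [hp3]; simp, fun _ => hdesc m Relation.ReflTransGen.refl⟩

lemma openFrom_of_parts {C A : Set V} {x y : V} {W : Walk G x y} (hnt : W.Nontrivial)
    (hf : W.firstHead = true) (hi : innerOpen C A W) (h : Bool)
    (hx : if h then x ∈ A else x ∉ C) : Walk.openFrom C A h W := by
  cases W with
  | nil => exact hnt.elim
  | cons u W0 =>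
    refine ⟨?_, hi⟩
    have hu : u.headStart = true := hf
    rw [hu, Bool.and_true]
    exact hx

lemma embed {a b : V} {C A : Set V} : ∀ {x y : V} (ω : Walk G x y),
    ∃ ω' : Walk (G.addBi a b) x y, (ω.Nontrivial → ω'.Nontrivial) ∧
      (∀ h, endFlag h ω' = endFlag h ω) ∧
      ∀ h, Walk.openFrom C A h ω → Walk.openFrom C A h ω' := by
  intro x y ω
  induction ω with
  | nil v => exact ⟨.nil v, fun h => h, fun _ => rfl, fun _ hh => hh⟩
  | cons s w ihw =>
    obtain ⟨w', p1, p2, p3⟩ := ihw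
    cases s with
    | dirF e =>
      exact ⟨.cons (.dirF e) w', fun _ => trivial, fun h => p2 _, fun h hh => ⟨hh.1, p3 _ hh.2⟩⟩
    | dirB e =>
      exact ⟨.cons (.dirB e) w', fun _ => trivial, fun h => p2 _, fun h hh => ⟨hh.1, p3 _ hh.2⟩⟩
    | bid e =>
      exact ⟨.cons (.bid (Or.inl e)) w', fun _ => trivial, fun h => p2 _,
        fun h hh => ⟨hh.1, p3 _ hh.2⟩⟩

lemma transfer {a b : V} {C A : Set V}
    (Wab : Walk G a b) (Wba : Walk G b a)
    (nab : Wab.Nontrivial) (fab : Wab.firstHead = true)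
    (eab : endFlag false Wab = true) (iab : innerOpen C A Wab)
    (nba : Wba.Nontrivial) (fba : Wba.firstHead = true)
    (eba : endFlag false Wba = true) (iba : innerOpen C A Wba) :
    ∀ {x y : V} (ω : Walk (G.addBi a b) x y),
      ∃ ω' : Walk G x y, (ω.Nontrivial → ω'.Nontrivial) ∧
        (∀ h, endFlag h ω' = endFlag h ω) ∧
        ∀ h, Walk.openFrom C A h ω → Walk.openFrom C A h ω' := by
  intro x y ω
  induction ω with
  | nil v => exact ⟨.nil v, fun h => h, fun _ => rfl, fun _ hh => hh⟩
  | cons s w ihw =>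
    obtain ⟨w', p1, p2, p3⟩ := ihw
    cases s with
    | dirF e =>
      exact ⟨.cons (.dirF e) w', fun _ => trivial, fun h => p2 _, fun h hh => ⟨hh.1, p3 _ hh.2⟩⟩
    | dirB e =>
      exact ⟨.cons (.dirB e) w', fun _ => trivial, fun h => p2 _, fun h hh => ⟨hh.1, p3 _ hh.2⟩⟩
    | bid e =>
      rcases e with e0 | ⟨rfl, rfl⟩ | ⟨rfl, rfl⟩
      · exact ⟨.cons (.bid e0) w', fun _ => trivial, fun h => p2 _,
          fun h hh => ⟨hh.1, p3 _ hh.2⟩⟩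
      · refine ⟨Wab.append w', fun _ => nontrivial_append_left _ _ nab, ?_, ?_⟩
        · intro h
          rw [endFlag_append, endFlag_congr nab _ false, eab]
          exact p2 true
        · intro h hh
          refine openFrom_append_of Wab w' h (openFrom_of_parts nab fab iab h ?_) ?_
          · have := hh.1
            simpa only [Step.headStart, Bool.and_true] using this
          · rw [endFlag_congr nab _ false, eab]
            exact p3 true hh.2
      · refine ⟨Wba.append w', fun _ => nontrivial_append_left _ _ nba, ?_, ?_⟩
        · intro h
          rw [endFlag_append, endFlag_congr nba _ false, eba]
          exact p2 true
        · intro h hh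
          refine openFrom_append_of Wba w' h (openFrom_of_parts nba fba iba h ?_) ?_
          · have := hh.1
            simpa only [Step.headStart, Bool.and_true] using this
          · rw [endFlag_congr nba _ false, eba]
            exact p3 true hh.2

lemma muConn_iff {G : DMG V} {C : Set V} {x y : V} (w : Walk G x y) :
    w.MuConn C ↔ w.Nontrivial ∧ x ∉ C ∧ Walk.openFrom C (G.anSet C) false w ∧
      endFlag false w = true := by
  cases w with
  | nil v => simp [Walk.MuConn, Walk.Nontrivial]
  | cons s w0 =>
    show (x ∉ C ∧ _ ∧ _) ↔ _
    constructor
    · rintro ⟨h1, h2, h3⟩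
      refine ⟨trivial, h1, ⟨?_, h2⟩, lastHead_cons s w0 ▸ h3⟩
      simp only [Bool.false_and, Bool.false_eq_true, if_false]
      exact h1
    · rintro ⟨_, h1, ⟨_, h2⟩, h3⟩
      exact ⟨h1, h2, (lastHead_cons s w0).trans h3⟩

end DMG

/-- Proposition 8: if there is a bidirected inducing path
from `a` to `b` in `G`, then adding the bidirected edge `a ↔ b` does not
change the independence model: `I(G⁺) = I(G)`. -/
theorem stmt9 {V : Type u} [Fintype V] (G : DMG V) (a b : V)
    (h : ∃ w : DMG.Walk G a b, G.IsBidirectedIP w) :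
    DMG.MarkovEq (G.addBi a b) G := by
  obtain ⟨w, hIP, hbw⟩ := h
  have hnt : w.Nontrivial := hIP.1
  have hanc : ∀ x ∈ w.nodes, G.anc x a ∨ G.anc x b := hIP.2.2.2.2
  intro A B C
  have hA : ∀ z, z ∉ G.anSet C → ∀ x, G.anc z x → x ∉ C :=
    fun z hz x hzx hxC => hz ⟨x, hxC, hzx⟩
  obtain ⟨Wab, nab, fab, eab, iab⟩ :=
    DMG.buildLink hA w hbw hanc (.nil a) trivial (fun h => h.elim) (Or.inl hnt)
  obtain ⟨Wba, nba, fba, eba, iba⟩ :=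
    DMG.buildLink hA w.rev (DMG.Walk.rev_allBid hbw)
      (fun x hx => (hanc x (DMG.Walk.mem_rev_nodes w hx)).symm) (.nil b) trivial
      (fun h => h.elim) (Or.inl (DMG.Walk.rev_nontrivial hnt))
  constructor
  · -- μ-separation in G⁺ implies μ-separation in G
    intro hsep α β hα hβ ω hμ
    rw [DMG.muConn_iff] at hμ
    obtain ⟨h1, h2, h3, h4⟩ := hμ
    obtain ⟨ω', p1, p2, p3⟩ := DMG.embed (a := a) (b := b) (C := C) (A := G.anSet C) ω
    refine hsep hα hβ ω' ((DMG.muConn_iff ω').mpr ⟨p1 h1, h2, p3 false h3, ?_⟩)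
    rw [p2 false]; exact h4
  · -- μ-separation in G implies μ-separation in G⁺
    intro hsep α β hα hβ ω hμ
    rw [DMG.muConn_iff] at hμ
    obtain ⟨h1, h2, h3, h4⟩ := hμ
    obtain ⟨ω', p1, p2, p3⟩ :=
      DMG.transfer Wab Wba nab fab eab iab nba fba eba iba ω
    refine hsep hα hβ ω' ((DMG.muConn_iff ω').mpr ⟨p1 h1, h2, p3 false h3, ?_⟩)
    rw [p2 false]; exact h4
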